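/- arXiv:2112.13625 — 4 statements merged into one kernel-verified Lean document; each statement's English description precedes it below -/
import Mathlib

section
/- Let n ≥ 2, let b_{ij} > 0 be symmetric (i ≠ j), let c_1,…,c_n > 0 with Σ_i c_i = 1, and define the matrix M by M_{ii} = Σ_{k≠i} c_k b_{ik} and M_{ij} = −√(c_i c_j) b_{ij} for i ≠ j. Then for all z ∈ ℝ^n, zᵀ M z ≥ μ |P_L z|², where μ = min_{i≠j} b_{ij} and P_L is the orthogonal projection onto the hyperplane orthogonal to (√c_1,…,√c_n). -/
/-- For the Maxwell–Stefan matrix `M` built from symmetric positive `b_{ij}` and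
molar fractions `c_i > 0` with `Σ c_i = 1`, one has `zᵀ M z ≥ μ |P_L z|²` for all `z`, where
`μ = min_{i≠j} b_{ij}` and `P_L` is the orthogonal projection onto the hyperplane orthogonal to
`(√c_1,…,√c_n)`, so that `(P_L z)_i = z_i - √c_i Σ_k √c_k z_k`. -/
theorem stmt3 (n : ℕ) (hn : 2 ≤ n) (b : Fin n → Fin n → ℝ)
    (hbs : ∀ i j, b i j = b j i) (hbpos : ∀ i j, i ≠ j → 0 < b i j)
    (c : Fin n → ℝ) (hc : ∀ i, 0 < c i) (hsum : ∑ i, c i = 1)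
    (M : Matrix (Fin n) (Fin n) ℝ)
    (hM : ∀ i j, M i j = if i = j then ∑ k ∈ Finset.univ.filter (fun k => k ≠ i), c k * b i k
      else -(Real.sqrt (c i * c j) * b i j))
    (μ : ℝ) (hμle : ∀ i j, i ≠ j → μ ≤ b i j) (hμmem : ∃ i j, i ≠ j ∧ μ = b i j) :
    ∀ z : Fin n → ℝ,
      μ * ∑ i, (z i - Real.sqrt (c i) * ∑ k, Real.sqrt (c k) * z k) ^ 2 ≤
        ∑ i, ∑ j, z i * M i j * z j := by
  intro z
  set s : Fin n → ℝ := fun i => Real.sqrt (c i) with hs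
  have hsq : ∀ i, s i * s i = c i := fun i => Real.mul_self_sqrt (hc i).le
  set S : ℝ := ∑ k, s k * z k with hS
  -- key symmetrization lemma
  have key : ∀ B : Fin n → Fin n → ℝ, (∀ i j, B i j = B j i) →
      ∑ i, ∑ j, B i j * (s j * z i - s i * z j) ^ 2
        = 2 * ∑ i, ∑ j, B i j * (c j * z i ^ 2 - s i * s j * (z i * z j)) := by
    intro B hB
    have hterm : ∀ i j, B i j * (s j * z i - s i * z j) ^ 2
        = B i j * (c j * z i ^ 2 - s i * s j * (z i * z j))
          + B j i * (c i * z j ^ 2 - s j * s i * (z j * z i)) := by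
      intro i j
      rw [← hB i j, ← hsq i, ← hsq j]; ring
    have hswap : ∑ i, ∑ j, B j i * (c i * z j ^ 2 - s j * s i * (z j * z i))
        = ∑ i, ∑ j, B i j * (c j * z i ^ 2 - s i * s j * (z i * z j)) :=
      Finset.sum_comm
    calc ∑ i, ∑ j, B i j * (s j * z i - s i * z j) ^ 2
        = ∑ i, ∑ j, (B i j * (c j * z i ^ 2 - s i * s j * (z i * z j))
            + B j i * (c i * z j ^ 2 - s j * s i * (z j * z i))) :=
          Finset.sum_congr rfl fun i _ => Finset.sum_congr rfl fun j _ => hterm i j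
      _ = (∑ i, ∑ j, B i j * (c j * z i ^ 2 - s i * s j * (z i * z j)))
            + ∑ i, ∑ j, B j i * (c i * z j ^ 2 - s j * s i * (z j * z i)) := by
          rw [← Finset.sum_add_distrib]
          exact Finset.sum_congr rfl fun i _ => Finset.sum_add_distrib
      _ = 2 * ∑ i, ∑ j, B i j * (c j * z i ^ 2 - s i * s j * (z i * z j)) := by
          rw [hswap]; ring
  -- the quadratic form
  have hA : ∑ i, ∑ j, z i * M i j * z j
      = ∑ i, ∑ j, b i j * (c j * z i ^ 2 - s i * s j * (z i * z j)) := by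
    apply Finset.sum_congr rfl
    intro i _
    have hRHS : ∑ j, b i j * (c j * z i ^ 2 - s i * s j * (z i * z j))
        = ∑ j ∈ Finset.univ.erase i, b i j * (c j * z i ^ 2 - s i * s j * (z i * z j)) := by
      refine (Finset.sum_erase _ ?_).symm
      rw [hsq]; ring
    rw [hRHS, ← Finset.add_sum_erase Finset.univ _ (Finset.mem_univ i)]
    have hdiag : z i * M i i * z i
        = ∑ k ∈ Finset.univ.erase i, c k * b i k * (z i * z i) := by
      rw [hM i i, if_pos rfl, Finset.filter_ne', Finset.mul_sum, Finset.sum_mul]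
      exact Finset.sum_congr rfl fun k _ => by ring
    rw [hdiag, ← Finset.sum_add_distrib]
    apply Finset.sum_congr rfl
    intro j hj
    have hji : j ≠ i := Finset.ne_of_mem_erase hj
    rw [hM i j, if_neg (fun h => hji h.symm), Real.sqrt_mul (hc i).le]
    ring
  -- the projection norm
  have e1 : ∀ i, ∑ j, μ * (c j * z i ^ 2 - s i * s j * (z i * z j))
      = μ * (z i ^ 2 - s i * z i * S) := by
    intro i
    have h1 : μ * (z i ^ 2 - s i * z i * S)
        = μ * (z i ^ 2 * (∑ j, c j) - s i * z i * ∑ j, s j * z j) := by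
      rw [hsum, ← hS]; ring
    rw [h1, Finset.mul_sum, Finset.mul_sum, ← Finset.sum_sub_distrib, Finset.mul_sum]
    exact Finset.sum_congr rfl fun j _ => by ring
  have e2 : ∑ i, (z i - s i * S) ^ 2 = ∑ i, z i ^ 2 - S ^ 2 := by
    calc ∑ i, (z i - s i * S) ^ 2
        = ∑ i, (z i ^ 2 - (s i * z i) * (2 * S) + c i * S ^ 2) :=
          Finset.sum_congr rfl fun i _ => by rw [← hsq i]; ring
      _ = ∑ i, z i ^ 2 - (∑ i, s i * z i) * (2 * S) + (∑ i, c i) * S ^ 2 := by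
          rw [Finset.sum_add_distrib, Finset.sum_sub_distrib, ← Finset.sum_mul, ← Finset.sum_mul]
      _ = ∑ i, z i ^ 2 - S ^ 2 := by rw [hsum, ← hS]; ring
  have e3 : ∑ i, μ * (z i ^ 2 - s i * z i * S) = μ * (∑ i, z i ^ 2 - S ^ 2) := by
    rw [← Finset.mul_sum, Finset.sum_sub_distrib, ← Finset.sum_mul, ← hS]; ring
  have hBmu : μ * ∑ i, (z i - s i * S) ^ 2
      = ∑ i, ∑ j, μ * (c j * z i ^ 2 - s i * s j * (z i * z j)) := by
    rw [e2, Finset.sum_congr rfl fun i _ => e1 i, e3]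
  -- comparison
  have hcmp : ∑ i, ∑ j, μ * (s j * z i - s i * z j) ^ 2
      ≤ ∑ i, ∑ j, b i j * (s j * z i - s i * z j) ^ 2 := by
    apply Finset.sum_le_sum
    intro i _
    apply Finset.sum_le_sum
    intro j _
    by_cases h : i = j
    · subst h; simp
    · exact mul_le_mul_of_nonneg_right (hμle i j h) (sq_nonneg _)
  have k1 : ∑ i, ∑ j, μ * (s j * z i - s i * z j) ^ 2
      = 2 * ∑ i, ∑ j, μ * (c j * z i ^ 2 - s i * s j * (z i * z j)) :=
    key (fun _ _ => μ) (fun _ _ => rfl)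
  have k2 := key b hbs
  rw [hA, hBmu]
  linarith
end

section
/- Under the hypotheses of the preceding statement (M defined from positive symmetric b_{ij} and molar fractions c_i, satisfying zᵀMz ≥ μ|P_L z|² with μ > 0, and M annihilating the vector (√c_1,…,√c_n)), the matrix M P_L + P_{L⊥} is invertible, so the Bott–Duffin inverse M^{BD} = P_L (M P_L + P_{L⊥})^{-1} is well-defined; moreover M^{BD} is symmetric and positive semidefinite on ℝ^n. -/
open Matrix Finset

lemma quadForm_eq {n : ℕ} (N : Matrix (Fin n) (Fin n) ℝ) (z : Fin n → ℝ) :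
    ∑ i, ∑ j, z i * N i j * z j = z ⬝ᵥ N.mulVec z := by
  simp only [dotProduct, Matrix.mulVec, Finset.mul_sum]
  exact Finset.sum_congr rfl fun i _ => Finset.sum_congr rfl fun j _ => by ring

/-- For the Maxwell–Stefan matrix `M` (with `zᵀMz ≥ μ|P_L z|²`, `μ > 0`, and
`M √c = 0`), the matrix `M P_L + P_{L⊥}` is invertible, so the Bott–Duffin inverse
`M^BD = P_L (M P_L + P_{L⊥})⁻¹` is well-defined; moreover `M^BD` is symmetric and positive
semidefinite. Here `(P_L)_{ij} = δ_{ij} - √(c_i c_j)` and `(P_{L⊥})_{ij} = √(c_i c_j)`. -/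
theorem stmt4 (n : ℕ) (hn : 2 ≤ n) (b : Fin n → Fin n → ℝ)
    (hbs : ∀ i j, b i j = b j i) (hbpos : ∀ i j, i ≠ j → 0 < b i j)
    (c : Fin n → ℝ) (hc : ∀ i, 0 < c i) (hsum : ∑ i, c i = 1)
    (M PL PLperp : Matrix (Fin n) (Fin n) ℝ)
    (hM : ∀ i j, M i j = if i = j then ∑ k ∈ Finset.univ.filter (fun k => k ≠ i), c k * b i k
      else -(Real.sqrt (c i * c j) * b i j))
    (hPL : ∀ i j, PL i j = (if i = j then (1 : ℝ) else 0) - Real.sqrt (c i * c j))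
    (hPLperp : ∀ i j, PLperp i j = Real.sqrt (c i * c j))
    (μ : ℝ) (hμpos : 0 < μ)
    (hcoer : ∀ z : Fin n → ℝ,
      μ * ∑ i, (PL.mulVec z i) ^ 2 ≤ ∑ i, ∑ j, z i * M i j * z j)
    (hker : M.mulVec (fun i => Real.sqrt (c i)) = 0) :
    IsUnit (M * PL + PLperp).det ∧
    (PL * (M * PL + PLperp)⁻¹).transpose = PL * (M * PL + PLperp)⁻¹ ∧
    ∀ z : Fin n → ℝ, 0 ≤ ∑ i, ∑ j, z i * (PL * (M * PL + PLperp)⁻¹) i j * z j := by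
  classical
  set s : Fin n → ℝ := fun i => Real.sqrt (c i) with hs
  have hsnn : ∀ i, (0:ℝ) ≤ c i := fun i => (hc i).le
  have hs2 : ∀ i, s i * s i = c i := fun i => Real.mul_self_sqrt (hsnn i)
  have hsq : ∀ i j, Real.sqrt (c i * c j) = s i * s j := fun i j => Real.sqrt_mul (hsnn i) _
  have hssum : ∑ i, s i * s i = 1 := by simp only [hs2]; exact hsum
  -- structure of PLperp and PL
  have hPerp : PLperp = Matrix.vecMulVec s s := by
    ext i j; rw [hPLperp, hsq, Matrix.vecMulVec_apply]
  have hPLeq : PL = 1 - PLperp := by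
    ext i j
    rw [hPL, Matrix.sub_apply, Matrix.one_apply, hPLperp]
  -- symmetry of M
  have hMsym : Mᵀ = M := by
    ext i j
    rw [Matrix.transpose_apply, hM, hM]
    rcases eq_or_ne i j with h | h
    · subst h; rfl
    · rw [if_neg (Ne.symm h), if_neg h, hbs j i, mul_comm (c j) (c i)]
  -- vecMul s M = 0
  have hvM : M.vecMul s = 0 := by
    rw [← Matrix.mulVec_transpose, hMsym, hker]
  -- key products
  have h1 : M * PLperp = 0 := by
    ext i j
    rw [Matrix.mul_apply, Matrix.zero_apply, hPerp]
    simp only [Matrix.vecMulVec_apply]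
    have : ∑ k, M i k * (s k * s j) = (∑ k, M i k * s k) * s j := by
      rw [Finset.sum_mul]; exact Finset.sum_congr rfl fun k _ => by ring
    rw [this, show (∑ k, M i k * s k) = M.mulVec s i from rfl, congrFun hker i]
    simp
  have h2 : PLperp * M = 0 := by
    ext i j
    rw [Matrix.mul_apply, Matrix.zero_apply, hPerp]
    simp only [Matrix.vecMulVec_apply]
    have : ∑ k, s i * s k * M k j = s i * (∑ k, s k * M k j) := by
      rw [Finset.mul_sum]; exact Finset.sum_congr rfl fun k _ => by ring
    rw [this, show (∑ k, s k * M k j) = M.vecMul s j from rfl, congrFun hvM j]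
    simp
  have h3 : PLperp * PLperp = PLperp := by
    ext i j
    rw [Matrix.mul_apply, hPerp]
    simp only [Matrix.vecMulVec_apply]
    have : ∑ k, s i * s k * (s k * s j) = s i * s j * ∑ k, s k * s k := by
      rw [Finset.mul_sum]; exact Finset.sum_congr rfl fun k _ => by ring
    rw [this, hssum, mul_one]
  have hMPL : M * PL = M := by
    rw [hPLeq, Matrix.mul_sub, Matrix.mul_one, h1, sub_zero]
  set A : Matrix (Fin n) (Fin n) ℝ := M + PLperp with hA
  have hAeq : M * PL + PLperp = A := by rw [hMPL]
  have hPerpT : PLperpᵀ = PLperp := by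
    ext i j; rw [Matrix.transpose_apply, hPerp]
    simp only [Matrix.vecMulVec_apply]; ring
  have hPLT : PLᵀ = PL := by
    rw [hPLeq, Matrix.transpose_sub, Matrix.transpose_one, hPerpT]
  have hAt : Aᵀ = A := by
    rw [hA, Matrix.transpose_add, hMsym, hPerpT]
  have hPLA : PL * A = M := by
    rw [hA, hPLeq, Matrix.sub_mul, Matrix.one_mul, Matrix.mul_add, h2, h3]
    abel
  have hAPL : A * PL = M := by
    rw [hA, hPLeq, Matrix.mul_sub, Matrix.mul_one, Matrix.add_mul, h1, h3]
    abel
  -- PLperp.mulVec z = (s ⬝ᵥ z) • s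
  have hPerpVec : ∀ z : Fin n → ℝ, ∀ i, PLperp.mulVec z i = s i * (s ⬝ᵥ z) := by
    intro z i
    show ∑ j, PLperp i j * z j = _
    rw [hPerp, dotProduct, Finset.mul_sum]
    exact Finset.sum_congr rfl fun j _ => by rw [Matrix.vecMulVec_apply]; ring
  -- coercivity in dot-product form, and nonnegativity of z ⬝ᵥ M z
  have hMz : ∀ z : Fin n → ℝ, μ * ∑ i, (PL.mulVec z i) ^ 2 ≤ z ⬝ᵥ M.mulVec z := by
    intro z; rw [← quadForm_eq]; exact hcoer z
  have hMznn : ∀ z : Fin n → ℝ, 0 ≤ z ⬝ᵥ M.mulVec z := fun z =>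
    le_trans (mul_nonneg hμpos.le (Finset.sum_nonneg fun i _ => sq_nonneg _)) (hMz z)
  -- injectivity of A
  have hz0 : ∀ z : Fin n → ℝ, A.mulVec z = 0 → z = 0 := by
    intro z hz0
    have hquad : z ⬝ᵥ A.mulVec z = 0 := by rw [hz0, dotProduct_zero]
    have hsplit : z ⬝ᵥ A.mulVec z = z ⬝ᵥ M.mulVec z + (s ⬝ᵥ z) * (s ⬝ᵥ z) := by
      rw [hA, Matrix.add_mulVec, dotProduct_add]
      congr 1
      rw [dotProduct]
      have : ∀ i, z i * PLperp.mulVec z i = (z i * s i) * (s ⬝ᵥ z) := by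
        intro i; rw [hPerpVec]; ring
      rw [Finset.sum_congr rfl fun i _ => this i, ← Finset.sum_mul]
      have : ∑ i, z i * s i = s ⬝ᵥ z := by
        rw [dotProduct]; exact Finset.sum_congr rfl fun i _ => mul_comm _ _
      rw [this]
    have hMzz : z ⬝ᵥ M.mulVec z = 0 ∧ (s ⬝ᵥ z) * (s ⬝ᵥ z) = 0 := by
      have h0 : z ⬝ᵥ M.mulVec z + (s ⬝ᵥ z) * (s ⬝ᵥ z) = 0 := by rw [← hsplit]; exact hquad
      constructor
      · nlinarith [hMznn z, mul_self_nonneg (s ⬝ᵥ z)]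
      · nlinarith [hMznn z, mul_self_nonneg (s ⬝ᵥ z)]
    have hsz : s ⬝ᵥ z = 0 := by
      have := hMzz.2; nlinarith [this]
    have hsum0 : ∑ i, (PL.mulVec z i) ^ 2 = 0 := by
      have h1' := hMz z
      rw [hMzz.1] at h1'
      have h2' : 0 ≤ ∑ i, (PL.mulVec z i) ^ 2 := Finset.sum_nonneg fun i _ => sq_nonneg _
      nlinarith
    have hPLz : ∀ i, PL.mulVec z i = 0 := by
      intro i
      have := (Finset.sum_eq_zero_iff_of_nonneg (fun i _ => sq_nonneg (PL.mulVec z i))).mp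
        hsum0 i (Finset.mem_univ i)
      exact pow_eq_zero_iff (by norm_num) |>.mp this
    funext i
    have : PL.mulVec z i = z i - s i * (s ⬝ᵥ z) := by
      rw [hPLeq, Matrix.sub_mulVec, Pi.sub_apply, Matrix.one_mulVec, hPerpVec]
    have h := hPLz i
    rw [this, hsz, mul_zero, sub_zero] at h
    simpa using h
  have hinj : Function.Injective A.mulVec := by
    intro x y hxy
    have : A.mulVec (x - y) = 0 := by rw [Matrix.mulVec_sub, hxy, sub_self]
    have := hz0 _ this
    exact sub_eq_zero.mp this
  have hdet : IsUnit A.det := (Matrix.isUnit_iff_isUnit_det A).mp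
    (Matrix.mulVec_injective_iff_isUnit.mp hinj)
  set B : Matrix (Fin n) (Fin n) ℝ := A⁻¹ with hB
  have hAB : A * B = 1 := Matrix.mul_nonsing_inv A hdet
  have hBA : B * A = 1 := Matrix.nonsing_inv_mul A hdet
  have e1 : PL * B = B * M * B := by
    have h : PL * B = (B * A) * PL * B := by rw [hBA, Matrix.one_mul]
    rw [h, Matrix.mul_assoc B A PL, hAPL, Matrix.mul_assoc]
  have e2 : B * PL = B * M * B := by
    have h : B * PL = B * PL * (A * B) := by rw [hAB, Matrix.mul_one]
    rw [h, ← Matrix.mul_assoc (B * PL) A B, Matrix.mul_assoc B PL A, hPLA]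
  have hcomm : PL * B = B * PL := by rw [e1, e2]
  have hBt : Bᵀ = B := by
    rw [hB, Matrix.transpose_nonsing_inv, hAt]
  refine ⟨by rw [hAeq]; exact hdet, ?_, ?_⟩
  · rw [hAeq, ← hB, Matrix.transpose_mul, hBt, hPLT, ← hcomm]
  · intro z
    rw [hAeq, ← hB, quadForm_eq]
    set w : Fin n → ℝ := B.mulVec z with hw
    have hzw : A.mulVec w = z := by
      rw [hw, Matrix.mulVec_mulVec, hAB, Matrix.one_mulVec]
    have hPBz : (PL * B).mulVec z = PL.mulVec w := by
      rw [← Matrix.mulVec_mulVec, ← hw]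
    rw [hPBz, ← hzw]
    have key : A.mulVec w ⬝ᵥ PL.mulVec w = w ⬝ᵥ M.mulVec w := by
      rw [Matrix.dotProduct_mulVec, ← Matrix.mulVec_transpose, hPLT,
        Matrix.mulVec_mulVec, hPLA, dotProduct_comm]
    rw [key]
    exact hMznn w
end

section
/- If b_{ij} > 0 for all i ≠ j are symmetric, ρ_1,…,ρ_n > 0 and θ > 0, then any vectors u_1,…,u_n ∈ ℝ^d satisfying θ Σ_{j≠i} b_{ij} ρ_i ρ_j (u_i − u_j) = 0 for all i and Σ_i ρ_i u_i = 0 must all vanish: u_i = 0 for every i. -/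
/-- With strictly positive symmetric `b_{ij}`, positive densities `ρ_i` and
temperature `θ > 0`, any `u_1,…,u_n` satisfying `θ Σ_j b_{ij} ρ_i ρ_j (u_i - u_j) = 0` for all
`i` together with `Σ_i ρ_i u_i = 0` must all vanish. -/
theorem stmt6 (n d : ℕ) (hn : 2 ≤ n) (b : Fin n → Fin n → ℝ)
    (hbs : ∀ i j, b i j = b j i) (hbpos : ∀ i j, i ≠ j → 0 < b i j)
    (ρ : Fin n → ℝ) (hρ : ∀ i, 0 < ρ i) (θ : ℝ) (hθ : 0 < θ)
    (u : Fin n → (Fin d → ℝ))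
    (hsys : ∀ i, θ • ∑ j, (b i j * ρ i * ρ j) • (u i - u j) = 0)
    (hcon : ∑ i, ρ i • u i = 0) :
    ∀ i, u i = 0 := by
  set c : Fin n → Fin n → ℝ := fun i j => b i j * ρ i * ρ j with hc
  have hcs : ∀ i j, c i j = c j i := by
    intro i j; simp only [hc]; rw [hbs i j]; ring
  have hcpos : ∀ i j, i ≠ j → 0 < c i j := fun i j h =>
    mul_pos (mul_pos (hbpos i j h) (hρ i)) (hρ j)
  have hsys' : ∀ (i : Fin n) (k : Fin d), ∑ j, c i j * (u i k - u j k) = 0 := by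
    intro i k
    have h := congrFun (hsys i) k
    simp only [Pi.smul_apply, Finset.sum_apply, Pi.sub_apply, Pi.zero_apply,
      smul_eq_mul] at h
    rcases mul_eq_zero.mp h with h' | h'
    · exact absurd h' hθ.ne'
    · exact h'
  have key : ∀ (k : Fin d) (i j : Fin n), u i k = u j k := by
    intro k
    set v : Fin n → ℝ := fun i => u i k with hv
    have h0 : ∀ i, ∑ j, c i j * (v i - v j) = 0 := fun i => hsys' i k
    have hS : ∑ i, ∑ j, c i j * (v i - v j) ^ 2 = 0 := by
      have e1 : ∀ i j : Fin n, c i j * (v i - v j) ^ 2 =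
          v i * (c i j * (v i - v j)) - v j * (c i j * (v i - v j)) := by
        intro i j; ring
      have first : ∑ i, ∑ j, v i * (c i j * (v i - v j)) = 0 := by
        apply Finset.sum_eq_zero; intro i _
        rw [← Finset.mul_sum, h0 i, mul_zero]
      have second : ∑ i, ∑ j, v j * (c i j * (v i - v j)) = 0 := by
        rw [Finset.sum_comm]
        apply Finset.sum_eq_zero; intro j _
        rw [← Finset.mul_sum]
        have : ∑ i, c i j * (v i - v j) = -∑ i, c j i * (v j - v i) := by
          rw [← Finset.sum_neg_distrib]
          apply Finset.sum_congr rfl; intro i _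
          rw [hcs i j]; ring
        rw [this, h0 j, neg_zero, mul_zero]
      calc ∑ i, ∑ j, c i j * (v i - v j) ^ 2
          = ∑ i, ∑ j, (v i * (c i j * (v i - v j)) - v j * (c i j * (v i - v j))) := by
            simp_rw [e1]
        _ = (∑ i, ∑ j, v i * (c i j * (v i - v j)))
            - ∑ i, ∑ j, v j * (c i j * (v i - v j)) := by
            rw [← Finset.sum_sub_distrib]
            apply Finset.sum_congr rfl; intro i _
            rw [Finset.sum_sub_distrib]
        _ = 0 := by rw [first, second, sub_zero]
    have hnn : ∀ i j : Fin n, 0 ≤ c i j * (v i - v j) ^ 2 := by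
      intro i j
      rcases eq_or_ne i j with h | h
      · simp [h]
      · exact mul_nonneg (hcpos i j h).le (sq_nonneg _)
    intro i j
    rcases eq_or_ne i j with h | h
    · rw [h]
    · have hinner : ∑ j', c i j' * (v i - v j') ^ 2 = 0 := by
        have := (Finset.sum_eq_zero_iff_of_nonneg
          (fun i' _ => Finset.sum_nonneg (fun j' _ => hnn i' j'))).mp hS i (Finset.mem_univ i)
        exact this
      have hterm : c i j * (v i - v j) ^ 2 = 0 :=
        (Finset.sum_eq_zero_iff_of_nonneg (fun j' _ => hnn i j')).mp hinner j
          (Finset.mem_univ j)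
      have : (v i - v j) ^ 2 = 0 := by
        rcases mul_eq_zero.mp hterm with h' | h'
        · exact absurd h' (hcpos i j h).ne'
        · exact h'
      have := pow_eq_zero_iff (n := 2) (by norm_num) |>.mp this
      linarith [sub_eq_zero.mp this]
  intro i
  have hall : ∀ j, u j = u i := fun j => funext (fun k => key k j i)
  have hsum : (∑ j, ρ j) • u i = 0 := by
    rw [← hcon, Finset.sum_smul]
    apply Finset.sum_congr rfl; intro j _
    rw [hall j]
  have hρsum : 0 < ∑ j, ρ j :=
    Finset.sum_pos (fun j _ => hρ j) ⟨⟨0, by omega⟩, Finset.mem_univ _⟩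
  rcases smul_eq_zero.mp hsum with h | h
  · exact absurd h hρsum.ne'
  · exact h
end

section
/- For the multicomponent ideal gas with free energy ρψ = Σ_i R_i θ ρ_i log ρ_i − Σ_i c_i ρ_i θ log θ (R_i, c_i > 0), the relative quantity J(ω|\barω) := ρe − \bar{ρe} − Σ_i \barμ_i (ρ_i − \barρ_i) − \barθ(ρη − \bar{ρη}) equals \barθ Σ_i R_i [ρ_i log ρ_i − \barρ_i log \barρ_i − (1 + log \barρ_i)(ρ_i − \barρ_i)] + \barθ Σ_i c_i ρ_i [−log θ + log \barθ + (θ − \barθ)/\barθ], and J(ω|\barω) ≥ 0 with equality iff ω = \barω, for ρ_i, \barρ_i, θ, \barθ > 0. -/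
lemma aux0 (t : ℝ) (ht : 0 < t) :
    0 ≤ t - 1 - Real.log t ∧ (t - 1 - Real.log t = 0 ↔ t = 1) := by
  have h1 := Real.log_le_sub_one_of_pos ht
  refine ⟨by linarith, ?_, ?_⟩
  · intro h
    by_contra hne
    have := Real.log_lt_sub_one_of_pos ht hne
    linarith
  · intro h; subst h; simp

lemma aux1 (x y : ℝ) (hx : 0 < x) (hy : 0 < y) :
    0 ≤ x * Real.log x - y * Real.log y - (1 + Real.log y) * (x - y) ∧
    (x * Real.log x - y * Real.log y - (1 + Real.log y) * (x - y) = 0 ↔ x = y) := by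
  have ht : 0 < y / x := div_pos hy hx
  obtain ⟨h0, h1⟩ := aux0 _ ht
  have key : x * Real.log x - y * Real.log y - (1 + Real.log y) * (x - y)
      = x * (y / x - 1 - Real.log (y / x)) := by
    rw [Real.log_div hy.ne' hx.ne']
    field_simp
    ring
  rw [key]
  refine ⟨mul_nonneg hx.le h0, ?_, ?_⟩
  · intro h
    rcases mul_eq_zero.mp h with h | h
    · exact absurd h hx.ne'
    · have := h1.mp h
      field_simp at this
      linarith
  · intro h; subst h
    rw [div_self hx.ne']
    simp

theorem stmt15 (n : ℕ) (hn : 0 < n) (R cc : Fin n → ℝ)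
    (hR : ∀ i, 0 < R i) (hcc : ∀ i, 0 < cc i)
    (ρ ρ' : Fin n → ℝ) (θ θ' : ℝ)
    (hρ : ∀ i, 0 < ρ i) (hρ' : ∀ i, 0 < ρ' i) (hθ : 0 < θ) (hθ' : 0 < θ')
    (J : ℝ)
    (hJ : J = (∑ i, cc i * ρ i * θ) - (∑ i, cc i * ρ' i * θ')
      - (∑ i, (R i * (1 + Real.log (ρ' i)) * θ' - cc i * θ' * Real.log θ') * (ρ i - ρ' i))
      - θ' * (((-∑ i, R i * ρ i * Real.log (ρ i)) + ∑ i, cc i * ρ i * (1 + Real.log θ))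
            - ((-∑ i, R i * ρ' i * Real.log (ρ' i)) + ∑ i, cc i * ρ' i * (1 + Real.log θ')))) :
    J = θ' * (∑ i, R i * (ρ i * Real.log (ρ i) - ρ' i * Real.log (ρ' i)
            - (1 + Real.log (ρ' i)) * (ρ i - ρ' i)))
      + θ' * (∑ i, cc i * ρ i * (-Real.log θ + Real.log θ' + (θ - θ') / θ'))
      ∧ 0 ≤ J ∧ (J = 0 ↔ ρ = ρ' ∧ θ = θ') := by
  set g : ℝ := -Real.log θ + Real.log θ' + (θ - θ') / θ' with hg
  have hgnn : 0 ≤ g ∧ (g = 0 ↔ θ = θ') := by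
    obtain ⟨h0, h1⟩ := aux0 (θ / θ') (div_pos hθ hθ')
    have e : g = θ / θ' - 1 - Real.log (θ / θ') := by
      rw [hg, Real.log_div hθ.ne' hθ'.ne']
      field_simp
      ring
    rw [e]
    refine ⟨h0, h1.trans ?_⟩
    rw [div_eq_one_iff_eq hθ'.ne']
  have hA : ∀ i, 0 ≤ R i * (ρ i * Real.log (ρ i) - ρ' i * Real.log (ρ' i)
      - (1 + Real.log (ρ' i)) * (ρ i - ρ' i)) ∧
      (R i * (ρ i * Real.log (ρ i) - ρ' i * Real.log (ρ' i)
      - (1 + Real.log (ρ' i)) * (ρ i - ρ' i)) = 0 ↔ ρ i = ρ' i) := by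
    intro i
    obtain ⟨h0, h1⟩ := aux1 (ρ i) (ρ' i) (hρ i) (hρ' i)
    refine ⟨mul_nonneg (hR i).le h0, ?_⟩
    rw [mul_eq_zero, or_iff_right (hR i).ne', h1]
  have hB : ∀ i, 0 ≤ cc i * ρ i * g := fun i =>
    mul_nonneg (mul_nonneg (hcc i).le (hρ i).le) hgnn.1
  have hident : J = θ' * (∑ i, R i * (ρ i * Real.log (ρ i) - ρ' i * Real.log (ρ' i)
            - (1 + Real.log (ρ' i)) * (ρ i - ρ' i)))
      + θ' * (∑ i, cc i * ρ i * g) := by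
    rw [hJ, hg]
    simp only [Finset.mul_sum, ← Finset.sum_neg_distrib, ← Finset.sum_add_distrib,
      ← Finset.sum_sub_distrib]
    refine Finset.sum_congr rfl fun i _ => ?_
    field_simp
    ring
  have hSA : 0 ≤ ∑ i, R i * (ρ i * Real.log (ρ i) - ρ' i * Real.log (ρ' i)
      - (1 + Real.log (ρ' i)) * (ρ i - ρ' i)) :=
    Finset.sum_nonneg fun i _ => (hA i).1
  have hSB : 0 ≤ ∑ i, cc i * ρ i * g := Finset.sum_nonneg fun i _ => hB i
  refine ⟨hident, ?_, ?_⟩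
  · rw [hident]
    positivity
  constructor
  · intro hJ0
    rw [hident] at hJ0
    have hsum : (∑ i, R i * (ρ i * Real.log (ρ i) - ρ' i * Real.log (ρ' i)
        - (1 + Real.log (ρ' i)) * (ρ i - ρ' i))) + (∑ i, cc i * ρ i * g) = 0 := by
      have : θ' * ((∑ i, R i * (ρ i * Real.log (ρ i) - ρ' i * Real.log (ρ' i)
        - (1 + Real.log (ρ' i)) * (ρ i - ρ' i))) + (∑ i, cc i * ρ i * g)) = 0 := by
        rw [mul_add]; linarith
      rcases mul_eq_zero.mp this with h | h
      · exact absurd h hθ'.ne'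
      · exact h
    have hSA0 : (∑ i, R i * (ρ i * Real.log (ρ i) - ρ' i * Real.log (ρ' i)
        - (1 + Real.log (ρ' i)) * (ρ i - ρ' i))) = 0 := le_antisymm (by linarith) hSA
    have hSB0 : (∑ i, cc i * ρ i * g) = 0 := le_antisymm (by linarith) hSB
    constructor
    · funext i
      have := (Finset.sum_eq_zero_iff_of_nonneg (fun i _ => (hA i).1)).mp hSA0 i
        (Finset.mem_univ i)
      exact (hA i).2.mp this
    · have hterm := (Finset.sum_eq_zero_iff_of_nonneg (fun i _ => hB i)).mp hSB0
        ⟨0, hn⟩ (Finset.mem_univ _)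
      have hpos : 0 < cc ⟨0, hn⟩ * ρ ⟨0, hn⟩ := mul_pos (hcc _) (hρ _)
      have hg0 : g = 0 := by
        rcases mul_eq_zero.mp hterm with h | h
        · exact absurd h hpos.ne'
        · exact h
      exact hgnn.2.mp hg0
  · rintro ⟨hρeq, hθeq⟩
    subst hρeq; subst hθeq
    rw [hident]
    have hg0 : g = 0 := hgnn.2.mpr rfl
    rw [hg0]
    have : ∀ i, R i * (ρ i * Real.log (ρ i) - ρ i * Real.log (ρ i)
        - (1 + Real.log (ρ i)) * (ρ i - ρ i)) = 0 := fun i => by ring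
    simp [this]
end
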